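/- Let H : ℝ^{m×n} × ℝ^{m×n} → ℝ be continuously differentiable with Frobenius gradients (∇_Q H, ∇_P H). Let Û ∈ ℂ^{m×k}, V̂ ∈ ℂ^{n×k} satisfy Û*Û = I_k, V̂*V̂ = I_k, and let S : ℝ → ℂ^{k×k} be differentiable on [t0, t1] satisfying, with Ẑ(t) = Û S(t) V̂*, Q(t) = Re Ẑ(t), P(t) = Im Ẑ(t), the equation S'(t) = −i Û* (∇_Q H(Q(t),P(t)) + i ∇_P H(Q(t),P(t))) V̂. Suppose Ẑ(t0) = Q0 + i P0, set Ẑ1 = Ẑ(t1) = Q̂1 + i P̂1, and let Z1 = Q1 + i P1 ∈ ℂ^{m×n} satisfy ‖Z1 − Ẑ1‖_F ≤ ϑ. Then |H(Q1, P1) − H(Q0, P0)| ≤ β ϑ, where β = max_{τ ∈ [0,1]} ‖( ∇_Q H, ∇_P H )(τ Q1 + (1−τ) Q̂1, τ P1 + (1−τ) P̂1)‖_F. -/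

import Mathlib

open Matrix

attribute [local instance] Matrix.frobeniusSeminormedAddCommGroup
  Matrix.frobeniusNormedAddCommGroup Matrix.frobeniusNormedSpace

/-- The Frobenius inner product `⟨A, B⟩_F = trace(Aᵀ B)`. -/
noncomputable def frobInner {m n : ℕ} (A B : Matrix (Fin m) (Fin n) ℝ) : ℝ :=
  (Aᵀ * B).trace

/-- The real Frobenius norm. -/
noncomputable def frobNorm {m n : ℕ} (A : Matrix (Fin m) (Fin n) ℝ) : ℝ :=
  Real.sqrt (frobInner A A)

/-- The complex Frobenius norm. -/
noncomputable def cfrobNorm {m n : ℕ} (A : Matrix (Fin m) (Fin n) ℂ) : ℝ :=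
  Real.sqrt ((Aᴴ * A).trace.re)

/- ### Auxiliary lemmas -/

lemma matrix_hasDerivAt {m n : ℕ} {c : ℝ → Matrix (Fin m) (Fin n) ℝ}
    {c' : Matrix (Fin m) (Fin n) ℝ} {t : ℝ}
    (h : ∀ i j, HasDerivAt (fun s => c s i j) (c' i j) t) : HasDerivAt c c' t := by
  exact hasDerivAt_pi.2 fun i => hasDerivAt_pi.2 fun j => h i j

lemma entry_hasDerivAt {m n k : ℕ} (U : Matrix (Fin m) (Fin k) ℂ) (V : Matrix (Fin n) (Fin k) ℂ)
    {S : ℝ → Matrix (Fin k) (Fin k) ℂ} {S' : Matrix (Fin k) (Fin k) ℂ} {t : ℝ}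
    (h : ∀ a b, HasDerivAt (fun s => S s a b) (S' a b) t) (i : Fin m) (j : Fin n) :
    HasDerivAt (fun s => (U * S s * Vᴴ) i j) ((U * S' * Vᴴ) i j) t := by
  simp only [Matrix.mul_apply, Finset.sum_mul]
  exact HasDerivAt.fun_sum fun b _ => HasDerivAt.fun_sum fun a _ =>
    (((h a b).const_mul (U i a)).mul_const (Vᴴ b j))

lemma continuous_entry {m n : ℕ} (i : Fin m) (j : Fin n) :
    Continuous (fun X : Matrix (Fin m) (Fin n) ℝ => X i j) :=
  (continuous_apply j).comp (continuous_apply i)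

lemma frobInner_eq_sum {m n : ℕ} (A B : Matrix (Fin m) (Fin n) ℝ) :
    frobInner A B = ∑ j, ∑ i, A i j * B i j := by
  simp [frobInner, Matrix.trace, Matrix.mul_apply, Matrix.diag]

lemma frobInner_self_nonneg {m n : ℕ} (A : Matrix (Fin m) (Fin n) ℝ) :
    0 ≤ frobInner A A := by
  rw [frobInner_eq_sum]
  exact Finset.sum_nonneg fun j _ => Finset.sum_nonneg fun i _ => mul_self_nonneg _

lemma frobNorm_sq {m n : ℕ} (A : Matrix (Fin m) (Fin n) ℝ) :
    frobNorm A ^ 2 = frobInner A A :=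
  Real.sq_sqrt (frobInner_self_nonneg A)

lemma abs_frobInner_le {m n : ℕ} (A B : Matrix (Fin m) (Fin n) ℝ) :
    |frobInner A B| ≤ frobNorm A * frobNorm B := by
  rw [frobNorm, frobNorm, ← Real.sqrt_mul (frobInner_self_nonneg A),
    ← Real.sqrt_sq_eq_abs]
  apply Real.sqrt_le_sqrt
  have h := Finset.sum_mul_sq_le_sq_mul_sq Finset.univ
    (fun p : Fin n × Fin m => A p.2 p.1) (fun p : Fin n × Fin m => B p.2 p.1)
  simpa [frobInner_eq_sum, Fintype.sum_prod_type, sq] using h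

lemma continuous_frobNorm {m n : ℕ} :
    Continuous (fun X : Matrix (Fin m) (Fin n) ℝ => frobNorm X) := by
  apply Real.continuous_sqrt.comp
  simp only [frobInner_eq_sum]
  exact continuous_finset_sum _ fun j _ => continuous_finset_sum _ fun i _ =>
    (continuous_entry i j).mul (continuous_entry i j)

lemma two_cs {a b c d : ℝ} (ha : 0 ≤ a) (hb : 0 ≤ b) (hc : 0 ≤ c) (hd : 0 ≤ d) :
    a * b + c * d ≤ Real.sqrt (a ^ 2 + c ^ 2) * Real.sqrt (b ^ 2 + d ^ 2) := by
  rw [← Real.sqrt_mul (by positivity),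
    show a * b + c * d = Real.sqrt ((a * b + c * d) ^ 2) from
      (Real.sqrt_sq (by positivity)).symm]
  apply Real.sqrt_le_sqrt
  nlinarith [sq_nonneg (a * d - c * b)]

lemma cfrobNorm_eq {m n : ℕ} (Z : Matrix (Fin m) (Fin n) ℂ) :
    cfrobNorm Z = Real.sqrt (frobInner (Z.map Complex.re) (Z.map Complex.re)
      + frobInner (Z.map Complex.im) (Z.map Complex.im)) := by
  unfold cfrobNorm
  congr 1
  simp only [frobInner_eq_sum, Matrix.trace, Matrix.mul_apply, Matrix.diag,
    Matrix.conjTranspose_apply, Matrix.map_apply, Complex.re_sum, ← Finset.sum_add_distrib]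
  refine Finset.sum_congr rfl fun j _ => Finset.sum_congr rfl fun i _ => ?_
  simp [Complex.mul_re]

lemma map_re_add_I_smul {m n : ℕ} (X Y : Matrix (Fin m) (Fin n) ℝ) :
    (X.map Complex.ofReal + Complex.I • Y.map Complex.ofReal).map Complex.re = X := by
  ext i j
  simp [Matrix.map_apply, Matrix.add_apply, Matrix.smul_apply, Complex.add_re, smul_eq_mul,
    Complex.mul_re]

lemma map_im_add_I_smul {m n : ℕ} (X Y : Matrix (Fin m) (Fin n) ℝ) :
    (X.map Complex.ofReal + Complex.I • Y.map Complex.ofReal).map Complex.im = Y := by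
  ext i j
  simp [Matrix.map_apply, Matrix.add_apply, Matrix.smul_apply, Complex.add_im, smul_eq_mul,
    Complex.mul_im]

lemma key_trace {m n : ℕ} (A B : Matrix (Fin m) (Fin n) ℝ) (Z : Matrix (Fin m) (Fin n) ℂ) :
    frobInner A (Z.map Complex.re) + frobInner B (Z.map Complex.im)
      = (((A.map Complex.ofReal + Complex.I • B.map Complex.ofReal))ᴴ * Z).trace.re := by
  simp only [frobInner_eq_sum, Matrix.trace, Matrix.mul_apply, Matrix.diag,
    Matrix.conjTranspose_apply, Matrix.map_apply, Matrix.add_apply, Matrix.smul_apply,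
    Complex.re_sum, ← Finset.sum_add_distrib]
  refine Finset.sum_congr rfl fun j _ => Finset.sum_congr rfl fun i _ => ?_
  simp [Complex.mul_re, smul_eq_mul]

lemma trace_skew {m n k : ℕ} (U : Matrix (Fin m) (Fin k) ℂ) (V : Matrix (Fin n) (Fin k) ℂ)
    (G : Matrix (Fin m) (Fin n) ℂ) :
    (Gᴴ * (U * ((-Complex.I) • (Uᴴ * G * V)) * Vᴴ)).trace.re = 0 := by
  set A := Uᴴ * G * V with hA
  have h1 : Gᴴ * (U * ((-Complex.I) • A) * Vᴴ) = (-Complex.I) • (Gᴴ * (U * A * Vᴴ)) := by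
    rw [Matrix.mul_smul, Matrix.smul_mul, Matrix.mul_smul]
  have h2 : (Gᴴ * (U * A * Vᴴ)).trace = (Aᴴ * A).trace := by
    have h4 : Gᴴ * (U * A * Vᴴ) = (Gᴴ * U * A) * Vᴴ := by
      rw [← Matrix.mul_assoc, ← Matrix.mul_assoc]
    rw [h4, Matrix.trace_mul_comm, hA]
    congr 1
    simp [Matrix.conjTranspose_mul, Matrix.mul_assoc]
  have h3 : (Aᴴ * A).trace.im = 0 := by
    simp only [Matrix.trace, Matrix.mul_apply, Matrix.diag, Matrix.conjTranspose_apply,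
      Complex.im_sum]
    refine Finset.sum_eq_zero fun j _ => Finset.sum_eq_zero fun i _ => ?_
    simp [Complex.mul_im]
    ring
  rw [h1, Matrix.trace_smul, h2, smul_eq_mul]
  simp [Complex.mul_re, h3]

/-- Theorem of Section 3.5: one step of the rank-adaptive integrator applied to the
Schrödinger-form reformulation `i Ż = ∇_Q H + i ∇_P H` of a Hamiltonian system preserves
the Hamiltonian up to `β ϑ`. -/
theorem rank_adaptive_hamiltonian_preservation
    {m n k : ℕ} {t0 t1 ϑ : ℝ}
    (H : Matrix (Fin m) (Fin n) ℝ × Matrix (Fin m) (Fin n) ℝ → ℝ)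
    (GQ GP : Matrix (Fin m) (Fin n) ℝ × Matrix (Fin m) (Fin n) ℝ → Matrix (Fin m) (Fin n) ℝ)
    (hH : Differentiable ℝ H)
    (hGQ : Continuous GQ) (hGP : Continuous GP)
    (hgrad : ∀ QP : Matrix (Fin m) (Fin n) ℝ × Matrix (Fin m) (Fin n) ℝ,
      ∀ X Y : Matrix (Fin m) (Fin n) ℝ,
        fderiv ℝ H QP (X, Y) = frobInner (GQ QP) X + frobInner (GP QP) Y)
    (Uhat : Matrix (Fin m) (Fin k) ℂ) (Vhat : Matrix (Fin n) (Fin k) ℂ)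
    (hU : Uhatᴴ * Uhat = 1) (hV : Vhatᴴ * Vhat = 1)
    (S : ℝ → Matrix (Fin k) (Fin k) ℂ)
    (Q P : ℝ → Matrix (Fin m) (Fin n) ℝ)
    (hQ : ∀ t, Q t = (Uhat * S t * Vhatᴴ).map Complex.re)
    (hP : ∀ t, P t = (Uhat * S t * Vhatᴴ).map Complex.im)
    (ht : t0 ≤ t1)
    (hS : ∀ t ∈ Set.Icc t0 t1, ∀ i j,
      HasDerivAt (fun s => S s i j)
        (((-Complex.I) • (Uhatᴴ *
          ((GQ (Q t, P t)).map Complex.ofReal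
            + Complex.I • (GP (Q t, P t)).map Complex.ofReal) * Vhat)) i j) t)
    (Q0 P0 Q1 P1 Qhat1 Phat1 : Matrix (Fin m) (Fin n) ℝ)
    (Z1 Zhat1 : Matrix (Fin m) (Fin n) ℂ)
    (hZ0 : Uhat * S t0 * Vhatᴴ
      = Q0.map Complex.ofReal + Complex.I • P0.map Complex.ofReal)
    (hZhat1 : Zhat1 = Uhat * S t1 * Vhatᴴ)
    (hQhat1 : Qhat1 = Zhat1.map Complex.re) (hPhat1 : Phat1 = Zhat1.map Complex.im)
    (hZ1 : Z1 = Q1.map Complex.ofReal + Complex.I • P1.map Complex.ofReal)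
    (htrunc : cfrobNorm (Z1 - Zhat1) ≤ ϑ)
    (hϑ : 0 ≤ ϑ)
    (β : ℝ)
    (hβ : β = ⨆ τ : Set.Icc (0:ℝ) 1,
      Real.sqrt
        (frobNorm (GQ ((τ : ℝ) • Q1 + (1 - (τ : ℝ)) • Qhat1,
            (τ : ℝ) • P1 + (1 - (τ : ℝ)) • Phat1)) ^ 2
          + frobNorm (GP ((τ : ℝ) • Q1 + (1 - (τ : ℝ)) • Qhat1,
            (τ : ℝ) • P1 + (1 - (τ : ℝ)) • Phat1)) ^ 2)) :
    |H (Q1, P1) - H (Q0, P0)| ≤ β * ϑ := by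
  -- endpoint identifications
  have hQt0 : Q t0 = Q0 := by rw [hQ, hZ0]; exact map_re_add_I_smul _ _
  have hPt0 : P t0 = P0 := by rw [hP, hZ0]; exact map_im_add_I_smul _ _
  have hQt1 : Q t1 = Qhat1 := by rw [hQ, ← hZhat1, ← hQhat1]
  have hPt1 : P t1 = Phat1 := by rw [hP, ← hZhat1, ← hPhat1]
  -- Part A : conservation of the Hamiltonian along the projected flow
  have hfder : ∀ t ∈ Set.Icc t0 t1, HasDerivAt (fun s => H (Q s, P s)) 0 t := by
    intro t htt
    set Gc := (GQ (Q t, P t)).map Complex.ofReal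
      + Complex.I • (GP (Q t, P t)).map Complex.ofReal with hGc
    set S' := (-Complex.I) • (Uhatᴴ * Gc * Vhat) with hS'
    have hQd : HasDerivAt Q ((Uhat * S' * Vhatᴴ).map Complex.re) t := by
      apply matrix_hasDerivAt
      intro i j
      have h1 := entry_hasDerivAt Uhat Vhat (fun a b => hS t htt a b) i j
      have h2 := Complex.reCLM.hasFDerivAt.comp_hasDerivAt t h1
      simp only [hQ, Matrix.map_apply]
      exact h2
    have hPd : HasDerivAt P ((Uhat * S' * Vhatᴴ).map Complex.im) t := by
      apply matrix_hasDerivAt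
      intro i j
      have h1 := entry_hasDerivAt Uhat Vhat (fun a b => hS t htt a b) i j
      have h2 := Complex.imCLM.hasFDerivAt.comp_hasDerivAt t h1
      simp only [hP, Matrix.map_apply]
      exact h2
    have hcurve : HasDerivAt (fun s => (Q s, P s))
        ((Uhat * S' * Vhatᴴ).map Complex.re, (Uhat * S' * Vhatᴴ).map Complex.im) t :=
      hQd.prodMk hPd
    have hHd := (hH (Q t, P t)).hasFDerivAt.comp_hasDerivAt t hcurve
    have hval : fderiv ℝ H (Q t, P t)
        ((Uhat * S' * Vhatᴴ).map Complex.re, (Uhat * S' * Vhatᴴ).map Complex.im) = 0 := by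
      rw [hgrad, key_trace, ← hGc, hS']
      exact trace_skew Uhat Vhat Gc
    exact hHd.congr_deriv hval
  have hcont : ContinuousOn (fun s => H (Q s, P s)) (Set.Icc t0 t1) :=
    fun x hx => ((hfder x hx).continuousAt).continuousWithinAt
  have hconst := constant_of_has_deriv_right_zero hcont
    (fun x hx => (hfder x (Set.mem_Icc_of_Ico hx)).hasDerivWithinAt)
  have hA : H (Qhat1, Phat1) = H (Q0, P0) := by
    have h := hconst t1 (Set.right_mem_Icc.2 ht)
    rw [hQt1, hPt1, hQt0, hPt0] at h
    exact h
  -- Part B : the truncation step changes the Hamiltonian by at most `β ϑ`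
  have hΔ : Real.sqrt (frobNorm (Q1 - Qhat1) ^ 2 + frobNorm (P1 - Phat1) ^ 2) ≤ ϑ := by
    have hZre : Z1.map Complex.re = Q1 := by rw [hZ1]; exact map_re_add_I_smul _ _
    have hZim : Z1.map Complex.im = P1 := by rw [hZ1]; exact map_im_add_I_smul _ _
    have hsubre : (Z1 - Zhat1).map Complex.re = Q1 - Qhat1 := by
      rw [← hZre, hQhat1]
      ext i j
      simp [Matrix.map_apply, Matrix.sub_apply, Complex.sub_re]
    have hsubim : (Z1 - Zhat1).map Complex.im = P1 - Phat1 := by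
      rw [← hZim, hPhat1]
      ext i j
      simp [Matrix.map_apply, Matrix.sub_apply, Complex.sub_im]
    rw [frobNorm_sq, frobNorm_sq, ← hsubre, ← hsubim, ← cfrobNorm_eq]
    exact htrunc
  -- the supremum bound
  have hbdd : BddAbove (Set.range fun τ : Set.Icc (0:ℝ) 1 =>
      Real.sqrt
        (frobNorm (GQ ((τ : ℝ) • Q1 + (1 - (τ : ℝ)) • Qhat1,
            (τ : ℝ) • P1 + (1 - (τ : ℝ)) • Phat1)) ^ 2
          + frobNorm (GP ((τ : ℝ) • Q1 + (1 - (τ : ℝ)) • Qhat1,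
            (τ : ℝ) • P1 + (1 - (τ : ℝ)) • Phat1)) ^ 2)) := by
    have hγc : Continuous (fun τ : ℝ =>
        ((τ : ℝ) • Q1 + (1 - (τ : ℝ)) • Qhat1, (τ : ℝ) • P1 + (1 - (τ : ℝ)) • Phat1)) :=
      ((continuous_id.smul continuous_const).add
        ((continuous_const.sub continuous_id).smul continuous_const)).prodMk
        ((continuous_id.smul continuous_const).add
          ((continuous_const.sub continuous_id).smul continuous_const))
    have hc : Continuous (fun τ : Set.Icc (0:ℝ) 1 =>
        Real.sqrt
          (frobNorm (GQ ((τ : ℝ) • Q1 + (1 - (τ : ℝ)) • Qhat1,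
              (τ : ℝ) • P1 + (1 - (τ : ℝ)) • Phat1)) ^ 2
            + frobNorm (GP ((τ : ℝ) • Q1 + (1 - (τ : ℝ)) • Qhat1,
              (τ : ℝ) • P1 + (1 - (τ : ℝ)) • Phat1)) ^ 2)) := by
      apply Real.continuous_sqrt.comp
      apply Continuous.add
      · exact ((continuous_frobNorm.comp (hGQ.comp
          (hγc.comp continuous_subtype_val))).pow 2)
      · exact ((continuous_frobNorm.comp (hGP.comp
          (hγc.comp continuous_subtype_val))).pow 2)
    exact (isCompact_range hc).bddAbove
  have hsup : ∀ τ : Set.Icc (0:ℝ) 1,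
      Real.sqrt
        (frobNorm (GQ ((τ : ℝ) • Q1 + (1 - (τ : ℝ)) • Qhat1,
            (τ : ℝ) • P1 + (1 - (τ : ℝ)) • Phat1)) ^ 2
          + frobNorm (GP ((τ : ℝ) • Q1 + (1 - (τ : ℝ)) • Qhat1,
            (τ : ℝ) • P1 + (1 - (τ : ℝ)) • Phat1)) ^ 2) ≤ β := by
    intro τ
    rw [hβ]
    exact le_ciSup hbdd τ
  have hβ0 : 0 ≤ β := le_trans (Real.sqrt_nonneg _) (hsup ⟨0, le_refl 0, zero_le_one⟩)
  -- path derivative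
  have hγd : ∀ τ : ℝ, HasDerivAt (fun τ : ℝ =>
      ((τ : ℝ) • Q1 + (1 - (τ : ℝ)) • Qhat1, (τ : ℝ) • P1 + (1 - (τ : ℝ)) • Phat1))
      (Q1 - Qhat1, P1 - Phat1) τ := by
    intro τ
    have hQc : HasDerivAt (fun τ : ℝ => τ • Q1 + (1 - τ) • Qhat1) (Q1 - Qhat1) τ := by
      have h1 : HasDerivAt (fun τ : ℝ => τ • Q1) ((1:ℝ) • Q1) τ :=
        (hasDerivAt_id τ).smul_const Q1
      have h2 : HasDerivAt (fun τ : ℝ => (1 - τ) • Qhat1) ((-1:ℝ) • Qhat1) τ :=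
        ((hasDerivAt_id τ).const_sub 1).smul_const Qhat1
      have h3 := h1.add h2
      exact h3.congr_deriv (by simp [sub_eq_add_neg])
    have hPc : HasDerivAt (fun τ : ℝ => τ • P1 + (1 - τ) • Phat1) (P1 - Phat1) τ := by
      have h1 : HasDerivAt (fun τ : ℝ => τ • P1) ((1:ℝ) • P1) τ :=
        (hasDerivAt_id τ).smul_const P1
      have h2 : HasDerivAt (fun τ : ℝ => (1 - τ) • Phat1) ((-1:ℝ) • Phat1) τ :=
        ((hasDerivAt_id τ).const_sub 1).smul_const Phat1
      have h3 := h1.add h2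
      exact h3.congr_deriv (by simp [sub_eq_add_neg])
    exact hQc.prodMk hPc
  have hg : ∀ τ ∈ Set.Icc (0:ℝ) 1, HasDerivWithinAt (fun τ : ℝ =>
      H ((τ : ℝ) • Q1 + (1 - (τ : ℝ)) • Qhat1, (τ : ℝ) • P1 + (1 - (τ : ℝ)) • Phat1))
      (fderiv ℝ H ((τ : ℝ) • Q1 + (1 - (τ : ℝ)) • Qhat1,
        (τ : ℝ) • P1 + (1 - (τ : ℝ)) • Phat1) (Q1 - Qhat1, P1 - Phat1))
      (Set.Icc (0:ℝ) 1) τ := by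
    intro τ _
    exact ((hH _).hasFDerivAt.comp_hasDerivAt τ (hγd τ)).hasDerivWithinAt
  have hbound : ∀ τ ∈ Set.Icc (0:ℝ) 1,
      ‖fderiv ℝ H ((τ : ℝ) • Q1 + (1 - (τ : ℝ)) • Qhat1,
        (τ : ℝ) • P1 + (1 - (τ : ℝ)) • Phat1) (Q1 - Qhat1, P1 - Phat1)‖ ≤ β * ϑ := by
    intro τ hτ
    rw [Real.norm_eq_abs, hgrad]
    calc |frobInner (GQ (τ • Q1 + (1 - τ) • Qhat1, τ • P1 + (1 - τ) • Phat1)) (Q1 - Qhat1)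
          + frobInner (GP (τ • Q1 + (1 - τ) • Qhat1, τ • P1 + (1 - τ) • Phat1)) (P1 - Phat1)|
        ≤ |frobInner (GQ (τ • Q1 + (1 - τ) • Qhat1, τ • P1 + (1 - τ) • Phat1)) (Q1 - Qhat1)|
          + |frobInner (GP (τ • Q1 + (1 - τ) • Qhat1, τ • P1 + (1 - τ) • Phat1)) (P1 - Phat1)| :=
          abs_add_le _ _
      _ ≤ frobNorm (GQ (τ • Q1 + (1 - τ) • Qhat1, τ • P1 + (1 - τ) • Phat1))
            * frobNorm (Q1 - Qhat1)
          + frobNorm (GP (τ • Q1 + (1 - τ) • Qhat1, τ • P1 + (1 - τ) • Phat1))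
            * frobNorm (P1 - Phat1) :=
          add_le_add (abs_frobInner_le _ _) (abs_frobInner_le _ _)
      _ ≤ Real.sqrt (frobNorm (GQ (τ • Q1 + (1 - τ) • Qhat1, τ • P1 + (1 - τ) • Phat1)) ^ 2
            + frobNorm (GP (τ • Q1 + (1 - τ) • Qhat1, τ • P1 + (1 - τ) • Phat1)) ^ 2)
          * Real.sqrt (frobNorm (Q1 - Qhat1) ^ 2 + frobNorm (P1 - Phat1) ^ 2) :=
          two_cs (Real.sqrt_nonneg _) (Real.sqrt_nonneg _)
            (Real.sqrt_nonneg _) (Real.sqrt_nonneg _)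
      _ ≤ β * ϑ :=
          mul_le_mul (hsup ⟨τ, hτ⟩) hΔ (Real.sqrt_nonneg _) hβ0
  have hMVT := (convex_Icc (0:ℝ) 1).norm_image_sub_le_of_norm_hasDerivWithin_le
    hg hbound (Set.left_mem_Icc.2 zero_le_one) (Set.right_mem_Icc.2 zero_le_one)
  simp only [one_smul, zero_smul, sub_zero, sub_self, add_zero, zero_add, sub_zero,
    Real.norm_eq_abs] at hMVT
  -- hMVT : |H (Q1, P1) - H (Qhat1, Phat1)| ≤ β * ϑ * |1 - 0|
  rw [show H (Q0, P0) = H (Qhat1, Phat1) from hA.symm]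
  calc |H (Q1, P1) - H (Qhat1, Phat1)| ≤ β * ϑ * |(1:ℝ)| := hMVT
    _ = β * ϑ := by norm_num
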